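/- Deformed-weight parametric Fourier identity (Example of the generalized Fourier identity with edge weights in d = 4-2ε): Let ε ∈ ℝ with ε < 1 and let A, B > 0 be real. Then both integrands below are Lebesgue integrable on (0,∞)² and ∫₀^∞ ∫₀^∞ α₂^{-ε} / ((α₁+α₂+1)·(α₂ + A·α₁ + B·α₁α₂)^{1-ε}) dα₁ dα₂ = ∫₀^∞ ∫₀^∞ α₁^{-ε} / ((α₁+α₂+1)^{1-ε}·(α₂ + A·α₁ + B·α₁α₂)) dα₁ dα₂. -/

import Mathlib

open MeasureTheory Set Real

/-- 1D integrable dominating function. -/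
lemma integrableD {p l : ℝ} (hp : p < 1) (hr : 1 < p + l) :
    IntegrableOn (fun x : ℝ => x ^ (-p) * (1+x) ^ (-l)) (Set.Ioi 0) := by
  have hl : 0 < l := by linarith
  have hmeas : Measurable (fun x : ℝ => x ^ (-p) * (1+x) ^ (-l)) := by fun_prop
  have h01 : IntegrableOn (fun x : ℝ => x ^ (-p) * (1+x) ^ (-l)) (Set.Ioc 0 1) := by
    have hint : IntegrableOn (fun x : ℝ => x ^ (-p)) (Set.Ioc 0 1) := by
      rw [← intervalIntegrable_iff_integrableOn_Ioc_of_le zero_le_one]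
      exact intervalIntegral.intervalIntegrable_rpow' (by linarith)
    refine hint.mono' hmeas.aestronglyMeasurable ?_
    filter_upwards [ae_restrict_mem measurableSet_Ioc] with x hx
    have hx0 : (0:ℝ) < x := hx.1
    rw [Real.norm_eq_abs, abs_mul, abs_of_nonneg (rpow_nonneg hx0.le _),
      abs_of_nonneg (rpow_nonneg (by linarith) _)]
    calc x ^ (-p) * (1+x) ^ (-l) ≤ x ^ (-p) * 1 := by
          gcongr
          exact rpow_le_one_of_one_le_of_nonpos (by linarith) (by linarith)
      _ = x ^ (-p) := mul_one _
  have h1i : IntegrableOn (fun x : ℝ => x ^ (-p) * (1+x) ^ (-l)) (Set.Ioi 1) := by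
    have hint : IntegrableOn (fun x : ℝ => x ^ (-(p+l))) (Set.Ioi 1) :=
      integrableOn_Ioi_rpow_of_lt (by linarith) one_pos
    refine hint.mono' hmeas.aestronglyMeasurable ?_
    filter_upwards [ae_restrict_mem measurableSet_Ioi] with x hx
    have hx0 : (0:ℝ) < x := lt_trans one_pos hx
    rw [Real.norm_eq_abs, abs_mul, abs_of_nonneg (rpow_nonneg hx0.le _),
      abs_of_nonneg (rpow_nonneg (by linarith) _)]
    calc x ^ (-p) * (1+x) ^ (-l) ≤ x ^ (-p) * x ^ (-l) :=
          mul_le_mul_of_nonneg_left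
            (rpow_le_rpow_of_nonpos hx0 (by linarith) (by linarith)) (rpow_nonneg hx0.le _)
      _ = x ^ (-(p+l)) := by rw [← rpow_add hx0]; ring_nf
  have : (Set.Ioi (0:ℝ)) = Set.Ioc 0 1 ∪ Set.Ioi 1 := (Set.Ioc_union_Ioi_eq_Ioi zero_le_one).symm
  rw [this]
  exact h01.union h1i

/-- AM-GM domination of the momentum-space integrand. -/
lemma generic_bound {ε A B a b c l x y : ℝ} (hε : ε ≤ 1) (hA : 0 < A) (hB : 0 < B)
    (ha : 0 ≤ a) (hb : 0 ≤ b) (hc : 0 ≤ c) (habc : a + b + c = 1)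
    (hl : 0 ≤ l) (hl1 : l ≤ 1) (hx : 0 < x) (hy : 0 < y) :
    y ^ (-ε) / ((x + y + 1) * (y + A*x + B*x*y) ^ (1-ε)) ≤
      (A ^ b * B ^ c) ^ (ε-1) *
        (x ^ (-((b+c)*(1-ε))) * (1+x) ^ (-l)) *
        (y ^ (-(ε+(a+c)*(1-ε))) * (1+y) ^ (-(1-l))) := by
  have hexp : ∀ u t : ℝ, (Real.exp u) ^ t = Real.exp (u*t) := fun u t => by
    rw [rpow_def_of_pos (exp_pos _), log_exp]
  set G : ℝ := y^a * (A*x)^b * (B*x*y)^c with hGdef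
  set H : ℝ := (1+x)^l * (1+y)^(1-l) with hHdef
  have hG : 0 < G := by positivity
  have hH : 0 < H := by positivity
  have hQ : (0:ℝ) < y + A*x + B*x*y := by positivity
  have hP : (0:ℝ) < x + y + 1 := by positivity
  have step1 : G ≤ y + A*x + B*x*y := by
    have hgm := Real.geom_mean_le_arith_mean3_weighted ha hb hc hy.le
      (by positivity : (0:ℝ) ≤ A*x) (by positivity : (0:ℝ) ≤ B*x*y) habc
    have h1 : a*y + b*(A*x) + c*(B*x*y) ≤ y + A*x + B*x*y := by
      have h1 : a*y ≤ y := by nlinarith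
      have h2 : b*(A*x) ≤ A*x := by nlinarith [mul_pos hA hx]
      have h3 : c*(B*x*y) ≤ B*x*y := by nlinarith [mul_pos (mul_pos hB hx) hy]
      linarith
    exact hgm.trans h1
  have step2 : H ≤ x + y + 1 := by
    have hgm := Real.geom_mean_le_arith_mean2_weighted hl (by linarith : (0:ℝ) ≤ 1-l)
      (by positivity : (0:ℝ) ≤ 1+x) (by positivity : (0:ℝ) ≤ 1+y) (by ring)
    have h1 : l*(1+x) + (1-l)*(1+y) ≤ x + y + 1 := by nlinarith
    exact hgm.trans h1
  have hden : H * G ^ (1-ε) ≤ (x + y + 1) * (y + A*x + B*x*y) ^ (1-ε) :=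
    mul_le_mul step2 (rpow_le_rpow hG.le step1 (by linarith)) (by positivity) hP.le
  have hle : y ^ (-ε) / ((x + y + 1) * (y + A*x + B*x*y) ^ (1-ε))
      ≤ y ^ (-ε) / (H * G ^ (1-ε)) :=
    div_le_div_of_nonneg_left (by positivity) (by positivity) hden
  refine hle.trans (le_of_eq ?_)
  rw [hGdef, hHdef]
  simp only [rpow_def_of_pos hx, rpow_def_of_pos hy, rpow_def_of_pos hA, rpow_def_of_pos hB,
    rpow_def_of_pos (show (0:ℝ) < A*x by positivity),
    rpow_def_of_pos (show (0:ℝ) < B*x*y by positivity),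
    rpow_def_of_pos (show (0:ℝ) < 1+x by positivity),
    rpow_def_of_pos (show (0:ℝ) < 1+y by positivity),
    log_mul hA.ne' hx.ne', log_mul (show (B*x:ℝ) ≠ 0 by positivity) hy.ne',
    log_mul hB.ne' hx.ne', hexp, ← exp_add, ← exp_sub]
  rw [Real.exp_eq_exp]
  ring

/-- Integrability of the momentum-space integrand. -/
lemma int_f1 {ε A B : ℝ} (hε : ε < 1) (hA : 0 < A) (hB : 0 < B) :
    IntegrableOn (fun α : ℝ × ℝ =>
        α.2 ^ (-ε) / ((α.1 + α.2 + 1) * (α.2 + A * α.1 + B * α.1 * α.2) ^ (1 - ε)))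
      (Set.Ioi 0 ×ˢ Set.Ioi 0) := by
  have h1ε : (0:ℝ) < 1 - ε := by linarith
  obtain ⟨a, b, c, l, ha, hb, hc, habc, hl, hl1, hp1, hr1, hq1, ht1⟩ :
      ∃ a b c l : ℝ, 0 ≤ a ∧ 0 ≤ b ∧ 0 ≤ c ∧ a + b + c = 1 ∧ 0 ≤ l ∧ l ≤ 1 ∧
        (b+c)*(1-ε) < 1 ∧ 1 < (b+c)*(1-ε) + l ∧
        ε+(a+c)*(1-ε) < 1 ∧ 1 < (ε+(a+c)*(1-ε)) + (1-l) := by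
    rcases le_or_gt ε 0 with h0 | h0
    · have hne : (1:ℝ)-ε ≠ 0 := by linarith
      have hkey : ∀ u v : ℝ, (u/(1-ε) + v/(1-ε))*(1-ε) = u+v := fun u v => by
        field_simp
      refine ⟨(1/4-ε)/(1-ε), (1/2)/(1-ε), (1/4)/(1-ε), 1/3,
        div_nonneg (by linarith) (by linarith), div_nonneg (by norm_num) (by linarith),
        div_nonneg (by norm_num) (by linarith), by field_simp; ring, by norm_num, by norm_num,
        by rw [hkey]; norm_num, by rw [hkey]; norm_num,
        by rw [hkey]; linarith, by rw [hkey]; linarith⟩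
    · refine ⟨1/4, 1/4, 1/2, (1+ε)/2, by norm_num, by norm_num, by norm_num, by norm_num,
        by linarith, by linarith, by nlinarith, by nlinarith, by nlinarith, by nlinarith⟩
  set p := (b+c)*(1-ε) with hp
  set q := ε+(a+c)*(1-ε) with hq
  set K := (A ^ b * B ^ c) ^ (ε-1) with hK
  have hs : MeasurableSet (Set.Ioi (0:ℝ) ×ˢ Set.Ioi (0:ℝ)) :=
    measurableSet_Ioi.prod measurableSet_Ioi
  have hprod : IntegrableOn
      (fun z : ℝ×ℝ => K * ((z.1 ^ (-p) * (1+z.1) ^ (-l)) * (z.2 ^ (-q) * (1+z.2) ^ (-(1-l)))))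
      (Set.Ioi 0 ×ˢ Set.Ioi 0) := by
    apply Integrable.const_mul
    have h := Integrable.mul_prod (μ := volume.restrict (Set.Ioi 0))
      (ν := volume.restrict (Set.Ioi 0)) (integrableD hp1 hr1) (integrableD (l := 1-l) hq1 (by linarith))
    rw [Measure.prod_restrict, ← Measure.volume_eq_prod] at h
    exact h
  have hcont : ContinuousOn (fun α : ℝ × ℝ =>
      α.2 ^ (-ε) / ((α.1 + α.2 + 1) * (α.2 + A * α.1 + B * α.1 * α.2) ^ (1 - ε)))
      (Set.Ioi 0 ×ˢ Set.Ioi 0) := by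
    apply ContinuousOn.div
    · exact ContinuousOn.rpow_const continuous_snd.continuousOn
        (fun z hz => Or.inl (ne_of_gt hz.2))
    · apply ContinuousOn.mul
      · fun_prop
      · exact ContinuousOn.rpow_const (by fun_prop)
          (fun z hz => Or.inl (ne_of_gt (add_pos (add_pos hz.2 (mul_pos hA hz.1))
            (mul_pos (mul_pos hB hz.1) hz.2))))
    · intro z hz
      have h1 : (0:ℝ) < z.1 := hz.1
      have h2 : (0:ℝ) < z.2 := hz.2
      positivity
  refine Integrable.mono' hprod (hcont.aestronglyMeasurable hs) ?_
  filter_upwards [ae_restrict_mem hs] with z hz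
  have h1 : (0:ℝ) < z.1 := hz.1
  have h2 : (0:ℝ) < z.2 := hz.2
  rw [Real.norm_eq_abs, abs_of_nonneg (by positivity)]
  calc z.2 ^ (-ε) / ((z.1 + z.2 + 1) * (z.2 + A * z.1 + B * z.1 * z.2) ^ (1 - ε))
      ≤ K * (z.1 ^ (-p) * (1+z.1) ^ (-l)) * (z.2 ^ (-q) * (1+z.2) ^ (-(1-l))) :=
        generic_bound hε.le hA hB ha hb hc habc hl hl1 h1 h2
    _ = K * ((z.1 ^ (-p) * (1+z.1) ^ (-l)) * (z.2 ^ (-q) * (1+z.2) ^ (-(1-l)))) := by ring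

/-- Determinant of a diagonal product map. -/
lemma det_prodMap (c₁ c₂ : ℝ) :
    (((1:ℝ→L[ℝ]ℝ).smulRight c₁).prodMap ((1:ℝ→L[ℝ]ℝ).smulRight c₂)).det = c₁*c₂ := by
  have h0 : (((1:ℝ→L[ℝ]ℝ).smulRight c₁).prodMap ((1:ℝ→L[ℝ]ℝ).smulRight c₂)
        : (ℝ×ℝ) →ₗ[ℝ] (ℝ×ℝ)).det
      = Matrix.det (LinearMap.toMatrix (Module.Basis.finTwoProd ℝ) (Module.Basis.finTwoProd ℝ) _) :=
    (LinearMap.det_toMatrix _ _).symm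
  rw [ContinuousLinearMap.det, h0]
  have h : (LinearMap.toMatrix (Module.Basis.finTwoProd ℝ) (Module.Basis.finTwoProd ℝ)
      (((1:ℝ→L[ℝ]ℝ).smulRight c₁).prodMap ((1:ℝ→L[ℝ]ℝ).smulRight c₂) : (ℝ×ℝ) →ₗ[ℝ] (ℝ×ℝ)))
      = !![c₁, 0; 0, c₂] := by
    ext i j
    fin_cases i <;> fin_cases j <;>
      simp [LinearMap.toMatrix_apply, Module.Basis.finTwoProd]
  rw [h, Matrix.det_fin_two_of]
  ring

/-- The key pointwise Cremona identity. -/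
lemma key_id {ε A B x y : ℝ} (hA : 0 < A) (hB : 0 < B) (hx : 0 < x) (hy : 0 < y) :
    (A/(B^2*x^2*y^2)) *
      (((B*x)⁻¹) ^ (-ε) / ((((B*x)⁻¹ + A*(B*y)⁻¹ + 1) ^ (1-ε)) *
        ((A*(B*y)⁻¹) + A*(B*x)⁻¹ + B*((B*x)⁻¹)*(A*(B*y)⁻¹))))
    = y ^ (-ε) / ((x+y+1) * (y+A*x+B*x*y)^(1-ε)) := by
  have hM : (0:ℝ) < B*x*y := by positivity
  have hN : (0:ℝ) < y + A*x + B*x*y := by positivity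
  have hS : (0:ℝ) < x + y + 1 := by positivity
  have e1 : (B*x)⁻¹ + A*(B*y)⁻¹ + 1 = (y + A*x + B*x*y)/(B*x*y) := by
    field_simp
  have e2 : (A*(B*y)⁻¹) + A*(B*x)⁻¹ + B*((B*x)⁻¹)*(A*(B*y)⁻¹) = A*(x+y+1)/(B*x*y) := by
    field_simp
  have e3 : ((B*x)⁻¹) ^ (-ε) = (B*x) ^ ε := by
    rw [Real.inv_rpow (le_of_lt (by positivity)), Real.rpow_neg (le_of_lt (by positivity)),
      inv_inv]
  rw [e1, e2, e3, Real.div_rpow hN.le hM.le]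
  have r1 : (B*x*y)^(1-ε) = (B*x*y) * (((B*x)^ε)⁻¹ * y^(-ε)) := by
    rw [show (1:ℝ)-ε = 1 + (-ε) by ring, Real.rpow_add hM, Real.rpow_one,
      Real.mul_rpow (by positivity) hy.le, Real.rpow_neg (by positivity) ε]
  rw [r1]
  have hBx : ((B*x:ℝ))^ε ≠ 0 := by positivity
  have hNe : ((y + A*x + B*x*y:ℝ))^(1-ε) ≠ 0 := by positivity
  have hye : (y:ℝ)^(-ε) ≠ 0 := by positivity
  field_simp

/-- Deformed-weight parametric Fourier identity: the Feynman-parametric representation of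
the momentum-space one-loop triangle with deformed weights equals that of its
position-space counterpart. -/
theorem deformed_weight_parametric_fourier_identity
    (ε : ℝ) (hε : ε < 1) (A B : ℝ) (hA : 0 < A) (hB : 0 < B) :
    IntegrableOn (fun α : ℝ × ℝ =>
        α.2 ^ (-ε) / ((α.1 + α.2 + 1) * (α.2 + A * α.1 + B * α.1 * α.2) ^ (1 - ε)))
      (Set.Ioi 0 ×ˢ Set.Ioi 0) ∧
    IntegrableOn (fun α : ℝ × ℝ =>
        α.1 ^ (-ε) / ((α.1 + α.2 + 1) ^ (1 - ε) * (α.2 + A * α.1 + B * α.1 * α.2)))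
      (Set.Ioi 0 ×ˢ Set.Ioi 0) ∧
    (∫ α in (Set.Ioi (0:ℝ)) ×ˢ (Set.Ioi (0:ℝ)),
        α.2 ^ (-ε) / ((α.1 + α.2 + 1) * (α.2 + A * α.1 + B * α.1 * α.2) ^ (1 - ε))) =
      ∫ α in (Set.Ioi (0:ℝ)) ×ˢ (Set.Ioi (0:ℝ)),
        α.1 ^ (-ε) / ((α.1 + α.2 + 1) ^ (1 - ε) * (α.2 + A * α.1 + B * α.1 * α.2)) := by
  have hs : MeasurableSet ((Set.Ioi (0:ℝ)) ×ˢ (Set.Ioi (0:ℝ))) :=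
    measurableSet_Ioi.prod measurableSet_Ioi
  set f₁ : ℝ × ℝ → ℝ := fun α =>
    α.2 ^ (-ε) / ((α.1 + α.2 + 1) * (α.2 + A * α.1 + B * α.1 * α.2) ^ (1 - ε)) with hf₁
  set f₂ : ℝ × ℝ → ℝ := fun α =>
    α.1 ^ (-ε) / ((α.1 + α.2 + 1) ^ (1 - ε) * (α.2 + A * α.1 + B * α.1 * α.2)) with hf₂
  have h1 : IntegrableOn f₁ (Set.Ioi 0 ×ˢ Set.Ioi 0) := int_f1 hε hA hB
  set T : ℝ × ℝ → ℝ × ℝ := fun z => ((B*z.1)⁻¹, A*(B*z.2)⁻¹) with hT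
  set T' : ℝ × ℝ → (ℝ × ℝ) →L[ℝ] (ℝ × ℝ) := fun z =>
    ((1:ℝ→L[ℝ]ℝ).smulRight (-B/(B*z.1)^2)).prodMap
      ((1:ℝ→L[ℝ]ℝ).smulRight (A*(-B/(B*z.2)^2))) with hT'
  have hf' : ∀ z ∈ (Set.Ioi (0:ℝ)) ×ˢ (Set.Ioi (0:ℝ)),
      HasFDerivWithinAt T (T' z) ((Set.Ioi (0:ℝ)) ×ˢ (Set.Ioi (0:ℝ))) z := by
    intro z hz
    have hz1 : (0:ℝ) < z.1 := hz.1
    have hz2 : (0:ℝ) < z.2 := hz.2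
    have hd1 : HasDerivAt (fun x : ℝ => (B*x)⁻¹) (-B/(B*z.1)^2) z.1 := by
      have h := ((hasDerivAt_id z.1).const_mul B).inv (ne_of_gt (mul_pos hB hz1))
      simp only [id_eq, mul_one] at h; exact h
    have hd2 : HasDerivAt (fun y : ℝ => A*(B*y)⁻¹) (A*(-B/(B*z.2)^2)) z.2 := by
      have h := ((hasDerivAt_id z.2).const_mul B).inv (ne_of_gt (mul_pos hB hz2))
      simpa using (h.const_mul A)
    exact (hd1.hasFDerivAt.prodMap z hd2.hasFDerivAt).hasFDerivWithinAt
  have hTT : ∀ z ∈ (Set.Ioi (0:ℝ)) ×ˢ (Set.Ioi (0:ℝ)), T (T z) = z := by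
    intro z hz
    have hz1 : (0:ℝ) < z.1 := hz.1
    have hz2 : (0:ℝ) < z.2 := hz.2
    have e1 : (B*(B*z.1)⁻¹)⁻¹ = z.1 := by field_simp
    have e2 : A*(B*(A*(B*z.2)⁻¹))⁻¹ = z.2 := by field_simp
    simp only [hT]
    exact Prod.ext e1 e2
  have hinj : Set.InjOn T ((Set.Ioi (0:ℝ)) ×ˢ (Set.Ioi (0:ℝ))) := by
    intro z1 hz1 z2 hz2 heq
    rw [← hTT z1 hz1, ← hTT z2 hz2, heq]
  have hmaps : Set.MapsTo T ((Set.Ioi (0:ℝ)) ×ˢ (Set.Ioi (0:ℝ)))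
      ((Set.Ioi (0:ℝ)) ×ˢ (Set.Ioi (0:ℝ))) := by
    intro z hz
    have hz1 : (0:ℝ) < z.1 := hz.1
    have hz2 : (0:ℝ) < z.2 := hz.2
    exact ⟨show (0:ℝ) < (B*z.1)⁻¹ by positivity, show (0:ℝ) < A*(B*z.2)⁻¹ by positivity⟩
  have himg : T '' ((Set.Ioi (0:ℝ)) ×ˢ (Set.Ioi (0:ℝ))) =
      (Set.Ioi (0:ℝ)) ×ˢ (Set.Ioi (0:ℝ)) := by
    refine Subset.antisymm (Set.image_subset_iff.mpr hmaps) (fun z hz => ?_)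
    exact ⟨T z, hmaps hz, hTT z hz⟩
  have hkey : ∀ z ∈ (Set.Ioi (0:ℝ)) ×ˢ (Set.Ioi (0:ℝ)),
      |(T' z).det| • f₂ (T z) = f₁ z := by
    intro z hz
    have hz1 : (0:ℝ) < z.1 := hz.1
    have hz2 : (0:ℝ) < z.2 := hz.2
    have hdet : (T' z).det = (-B/(B*z.1)^2) * (A*(-B/(B*z.2)^2)) := det_prodMap _ _
    have habs : |(T' z).det| = A/(B^2*z.1^2*z.2^2) := by
      rw [hdet]
      have : (-B/(B*z.1)^2) * (A*(-B/(B*z.2)^2)) = A/(B^2*z.1^2*z.2^2) := by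
        field_simp
      rw [this, abs_of_pos (by positivity)]
    rw [habs, smul_eq_mul]
    exact key_id hA hB hz1 hz2
  have h2iff := integrableOn_image_iff_integrableOn_abs_det_fderiv_smul volume hs hf' hinj f₂
  rw [himg] at h2iff
  have h2 : IntegrableOn f₂ ((Set.Ioi (0:ℝ)) ×ˢ (Set.Ioi (0:ℝ))) :=
    h2iff.mpr (h1.congr_fun (fun z hz => (hkey z hz).symm) hs)
  have h3 := integral_image_eq_integral_abs_det_fderiv_smul volume hs hf' hinj f₂
  rw [himg] at h3
  refine ⟨h1, h2, ?_⟩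
  rw [show (∫ α in (Set.Ioi (0:ℝ)) ×ˢ (Set.Ioi (0:ℝ)), f₂ α) =
      ∫ z in (Set.Ioi (0:ℝ)) ×ˢ (Set.Ioi (0:ℝ)), |(T' z).det| • f₂ (T z) from h3]
  exact (setIntegral_congr_fun hs (fun z hz => (hkey z hz).symm))
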